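/- There exists a universal constant C > 0 such that the following holds. Assume μ ≥ μ_h, 0 < ε ≤ 1/15, and L ≥ C·μ²·s·(K+N)·(log L)². Suppose (i) |‖𝒜(P_T(Z))‖² − ‖P_T(Z)‖_F²| ≤ (1/10)‖Z‖_F² for every block-diagonal Z, and (ii) the rank-one bound holds: ‖𝒜(ℋ(h,x))‖² ≤ (4/3)‖ℋ(h,x)‖_F² + 2√(2s‖ℋ(h,x)‖_F²·σ_max²(h,x)·(K+N)·log L) + 8s·σ_max²(h,x)·(K+N)·log L for all h ∈ ℂ^{Ks}, x ∈ ℂ^{Ns}. Then (2/3)‖ℋ(h,x) − X_0‖_F² ≤ ‖𝒜(ℋ(h,x) − X_0)‖² ≤ (3/2)‖ℋ(h,x) − X_0‖_F² uniformly for all (h,x) ∈ 𝒩_d ∩ 𝒩_μ ∩ 𝒩_ε. -/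

import Mathlib

noncomputable section
open Finset ComplexConjugate

namespace RGD

/-- Squared Euclidean norm of a complex vector. -/
def vnormSq {n : ℕ} (v : Fin n → ℂ) : ℝ := ∑ j, ‖v j‖ ^ 2

/-- Euclidean norm of a complex vector. -/
def vnorm {n : ℕ} (v : Fin n → ℂ) : ℝ := Real.sqrt (vnormSq v)

/-- Inner product, conjugate-linear in the first argument. -/
def vinner {n : ℕ} (u v : Fin n → ℂ) : ℂ := ∑ j, conj (u j) * v j

/-- Squared Frobenius norm of a matrix. -/
def frobSq {K N : ℕ} (Z : Matrix (Fin K) (Fin N) ℂ) : ℝ := ∑ k, ∑ j, ‖Z k j‖ ^ 2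

/-- Frobenius norm of a matrix. -/
def frob {K N : ℕ} (Z : Matrix (Fin K) (Fin N) ℂ) : ℝ := Real.sqrt (frobSq Z)

/-- Frobenius inner product `⟨U,V⟩ = Tr(U*V)`, conjugate-linear in the first argument. -/
def finner {K N : ℕ} (U V : Matrix (Fin K) (Fin N) ℂ) : ℂ := ∑ k, ∑ j, conj (U k j) * V k j

/-- Spectral (operator) norm of a matrix: sup of `‖Zv‖` over the closed unit ball. -/
def opNorm {K N : ℕ} (Z : Matrix (Fin K) (Fin N) ℂ) : ℝ :=
  sSup {r : ℝ | ∃ v : Fin N → ℂ, vnorm v ≤ 1 ∧ r = vnorm (Z.mulVec v)}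

/-- Squared Frobenius norm of a block-diagonal matrix, given by its diagonal blocks. -/
def famFrobSq {K N s : ℕ} (Z : Fin s → Matrix (Fin K) (Fin N) ℂ) : ℝ := ∑ i, frobSq (Z i)

/-- Frobenius norm of a block-diagonal matrix, given by its diagonal blocks. -/
def famFrob {K N s : ℕ} (Z : Fin s → Matrix (Fin K) (Fin N) ℂ) : ℝ := Real.sqrt (famFrobSq Z)

/-- The rank-one matrix `u v*`. -/
def rankOne {K N : ℕ} (u : Fin K → ℂ) (v : Fin N → ℂ) : Matrix (Fin K) (Fin N) ℂ :=
  Matrix.of fun k j => u k * conj (v j)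

/-- `ℋ(h,x)`: block-diagonal matrix with `i`-th block `hᵢ xᵢ*`. -/
def Hmap {K N s : ℕ} (h : Fin s → Fin K → ℂ) (x : Fin s → Fin N → ℂ) :
    Fin s → Matrix (Fin K) (Fin N) ℂ := fun i => rankOne (h i) (x i)

/-- `𝒜ᵢ(Z) = (bₗ* Z aₗ)ₗ`. -/
def calAi {K N L : ℕ} (b : Fin L → Fin K → ℂ) (a : Fin L → Fin N → ℂ)
    (Z : Matrix (Fin K) (Fin N) ℂ) : Fin L → ℂ :=
  fun l => vinner (b l) (Z.mulVec (a l))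

/-- `𝒜(Z) = Σᵢ 𝒜ᵢ(Zᵢ)` on block-diagonal matrices. -/
def calA {K N L s : ℕ} (b : Fin L → Fin K → ℂ) (a : Fin s → Fin L → Fin N → ℂ)
    (Z : Fin s → Matrix (Fin K) (Fin N) ℂ) : Fin L → ℂ :=
  fun l => ∑ i, calAi b (a i) (Z i) l

/-- `𝒜ᵢ*(z) = Σₗ zₗ bₗ aₗ*`. -/
def calAdj {K N L : ℕ} (b : Fin L → Fin K → ℂ) (a : Fin L → Fin N → ℂ)
    (z : Fin L → ℂ) : Matrix (Fin K) (Fin N) ℂ :=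
  Matrix.of fun k j => ∑ l, z l * b l k * conj (a l j)

/-- `‖𝒜*(e)‖ = maxᵢ ‖𝒜ᵢ*(e)‖` (operator norms). -/
def AadjNorm {K N L s : ℕ} (b : Fin L → Fin K → ℂ) (a : Fin s → Fin L → Fin N → ℂ)
    (e : Fin L → ℂ) : ℝ :=
  ⨆ i : Fin s, opNorm (calAdj b (a i) e)

/-- `B*B = I_K`, expressed in terms of the columns `bₗ` of `B*`. -/
def BtBeqI {K L : ℕ} (b : Fin L → Fin K → ℂ) : Prop :=
  ∀ k k' : Fin K, (∑ l, b l k * conj (b l k')) = if k = k' then (1 : ℂ) else 0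

/-- `μ ≥ μ_h`, i.e. `√L ‖B h_{i0}‖_∞ ≤ μ ‖h_{i0}‖` for all `i`. -/
def muhLe {K L s : ℕ} (b : Fin L → Fin K → ℂ) (h0 : Fin s → Fin K → ℂ) (μ : ℝ) : Prop :=
  ∀ i l, Real.sqrt L * ‖vinner (b l) (h0 i)‖ ≤ μ * vnorm (h0 i)

/-- `d₀ = √(Σᵢ d_{i0}²)`. -/
def dtot {s : ℕ} (d0 : Fin s → ℝ) : ℝ := Real.sqrt (∑ i, d0 i ^ 2)

/-- Condition number `κ = (maxᵢ d_{i0}) / (minᵢ d_{i0})`. -/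
def kappa {s : ℕ} (d0 : Fin s → ℝ) : ℝ := (⨆ i, d0 i) / (⨅ i, d0 i)

/-- The observation `y = 𝒜(ℋ(h₀,x₀)) + e`. -/
def yvec {K N L s : ℕ} (b : Fin L → Fin K → ℂ) (a : Fin s → Fin L → Fin N → ℂ)
    (h0 : Fin s → Fin K → ℂ) (x0 : Fin s → Fin N → ℂ) (e : Fin L → ℂ) : Fin L → ℂ :=
  fun l => calA b a (Hmap h0 x0) l + e l

/-- `F(h,x) = ‖𝒜(ℋ(h,x)) − y‖²`. -/
def Fobj {K N L s : ℕ} (b : Fin L → Fin K → ℂ) (a : Fin s → Fin L → Fin N → ℂ)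
    (h0 : Fin s → Fin K → ℂ) (x0 : Fin s → Fin N → ℂ) (e : Fin L → ℂ)
    (h : Fin s → Fin K → ℂ) (x : Fin s → Fin N → ℂ) : ℝ :=
  vnormSq (fun l => calA b a (Hmap h x) l - yvec b a h0 x0 e l)

def G0 (z : ℝ) : ℝ := max (z - 1) 0 ^ 2

def G0' (z : ℝ) : ℝ := 2 * max (z - 1) 0

/-- The `i`-th regularizer `Gᵢ(hᵢ,xᵢ)` (including the factor `ρ`). -/
def Gi {K N L : ℕ} (b : Fin L → Fin K → ℂ) (ρ μ di : ℝ)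
    (hi : Fin K → ℂ) (xi : Fin N → ℂ) : ℝ :=
  ρ * (G0 (vnormSq hi / (2 * di)) + G0 (vnormSq xi / (2 * di))
    + ∑ l, G0 ((L : ℝ) * ‖vinner (b l) hi‖ ^ 2 / (8 * di * μ ^ 2)))

/-- The regularizer `G(h,x) = Σᵢ Gᵢ(hᵢ,xᵢ)`. -/
def Greg {K N L s : ℕ} (b : Fin L → Fin K → ℂ) (ρ μ : ℝ) (dd : Fin s → ℝ)
    (h : Fin s → Fin K → ℂ) (x : Fin s → Fin N → ℂ) : ℝ :=
  ∑ i, Gi b ρ μ (dd i) (h i) (x i)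

/-- `F̃ = F + G`. -/
def Ftil {K N L s : ℕ} (b : Fin L → Fin K → ℂ) (a : Fin s → Fin L → Fin N → ℂ)
    (h0 : Fin s → Fin K → ℂ) (x0 : Fin s → Fin N → ℂ) (e : Fin L → ℂ)
    (ρ μ : ℝ) (dd : Fin s → ℝ)
    (h : Fin s → Fin K → ℂ) (x : Fin s → Fin N → ℂ) : ℝ :=
  Fobj b a h0 x0 e h x + Greg b ρ μ dd h x

/-- The residual `𝒜(ℋ(h,x)) − y`. -/
def residual {K N L s : ℕ} (b : Fin L → Fin K → ℂ) (a : Fin s → Fin L → Fin N → ℂ)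
    (h0 : Fin s → Fin K → ℂ) (x0 : Fin s → Fin N → ℂ) (e : Fin L → ℂ)
    (h : Fin s → Fin K → ℂ) (x : Fin s → Fin N → ℂ) : Fin L → ℂ :=
  fun l => calA b a (Hmap h x) l - yvec b a h0 x0 e l

/-- Wirtinger gradient `∇F_{hᵢ} = 𝒜ᵢ*(𝒜(ℋ(h,x)) − y) xᵢ`. -/
def gradFh {K N L s : ℕ} (b : Fin L → Fin K → ℂ) (a : Fin s → Fin L → Fin N → ℂ)
    (h0 : Fin s → Fin K → ℂ) (x0 : Fin s → Fin N → ℂ) (e : Fin L → ℂ)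
    (h : Fin s → Fin K → ℂ) (x : Fin s → Fin N → ℂ) (i : Fin s) : Fin K → ℂ :=
  (calAdj b (a i) (residual b a h0 x0 e h x)).mulVec (x i)

/-- Wirtinger gradient `∇F_{xᵢ} = (𝒜ᵢ*(𝒜(ℋ(h,x)) − y))* hᵢ`. -/
def gradFx {K N L s : ℕ} (b : Fin L → Fin K → ℂ) (a : Fin s → Fin L → Fin N → ℂ)
    (h0 : Fin s → Fin K → ℂ) (x0 : Fin s → Fin N → ℂ) (e : Fin L → ℂ)
    (h : Fin s → Fin K → ℂ) (x : Fin s → Fin N → ℂ) (i : Fin s) : Fin N → ℂ :=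
  (calAdj b (a i) (residual b a h0 x0 e h x)).conjTranspose.mulVec (h i)

/-- Wirtinger gradient `∇G_{hᵢ}`. -/
def gradGh {K L s : ℕ} (b : Fin L → Fin K → ℂ) (ρ μ : ℝ) (dd : Fin s → ℝ)
    (h : Fin s → Fin K → ℂ) (i : Fin s) : Fin K → ℂ :=
  fun k => ((ρ / (2 * dd i) : ℝ) : ℂ) *
    (((G0' (vnormSq (h i) / (2 * dd i)) : ℝ) : ℂ) * h i k
      + (((L : ℝ) / (4 * μ ^ 2) : ℝ) : ℂ) *
        ∑ l, ((G0' ((L : ℝ) * ‖vinner (b l) (h i)‖ ^ 2 / (8 * dd i * μ ^ 2)) : ℝ) : ℂ)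
          * (vinner (b l) (h i) * b l k))

/-- Wirtinger gradient `∇G_{xᵢ}`. -/
def gradGx {N s : ℕ} (ρ : ℝ) (dd : Fin s → ℝ)
    (x : Fin s → Fin N → ℂ) (i : Fin s) : Fin N → ℂ :=
  fun j => ((ρ / (2 * dd i) : ℝ) : ℂ) * (((G0' (vnormSq (x i) / (2 * dd i)) : ℝ) : ℂ) * x i j)

/-- `∇F̃_{hᵢ} = ∇F_{hᵢ} + ∇G_{hᵢ}`. -/
def gradH {K N L s : ℕ} (b : Fin L → Fin K → ℂ) (a : Fin s → Fin L → Fin N → ℂ)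
    (h0 : Fin s → Fin K → ℂ) (x0 : Fin s → Fin N → ℂ) (e : Fin L → ℂ)
    (ρ μ : ℝ) (dd : Fin s → ℝ)
    (h : Fin s → Fin K → ℂ) (x : Fin s → Fin N → ℂ) (i : Fin s) : Fin K → ℂ :=
  fun k => gradFh b a h0 x0 e h x i k + gradGh b ρ μ dd h i k

/-- `∇F̃_{xᵢ} = ∇F_{xᵢ} + ∇G_{xᵢ}`. -/
def gradX {K N L s : ℕ} (b : Fin L → Fin K → ℂ) (a : Fin s → Fin L → Fin N → ℂ)
    (h0 : Fin s → Fin K → ℂ) (x0 : Fin s → Fin N → ℂ) (e : Fin L → ℂ)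
    (ρ μ : ℝ) (dd : Fin s → ℝ)
    (h : Fin s → Fin K → ℂ) (x : Fin s → Fin N → ℂ) (i : Fin s) : Fin N → ℂ :=
  fun j => gradFx b a h0 x0 e h x i j + gradGx ρ dd x i j

/-- `‖∇F̃(h,x)‖²` (squared norm of the stacked Wirtinger gradient). -/
def gradNormSq {K N L s : ℕ} (b : Fin L → Fin K → ℂ) (a : Fin s → Fin L → Fin N → ℂ)
    (h0 : Fin s → Fin K → ℂ) (x0 : Fin s → Fin N → ℂ) (e : Fin L → ℂ)
    (ρ μ : ℝ) (dd : Fin s → ℝ)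
    (h : Fin s → Fin K → ℂ) (x : Fin s → Fin N → ℂ) : ℝ :=
  ∑ i, vnormSq (gradH b a h0 x0 e ρ μ dd h x i) + ∑ i, vnormSq (gradX b a h0 x0 e ρ μ dd h x i)

/-- `‖∇F̃(h',x') − ∇F̃(h,x)‖²`. -/
def gradDiffNormSq {K N L s : ℕ} (b : Fin L → Fin K → ℂ) (a : Fin s → Fin L → Fin N → ℂ)
    (h0 : Fin s → Fin K → ℂ) (x0 : Fin s → Fin N → ℂ) (e : Fin L → ℂ)
    (ρ μ : ℝ) (dd : Fin s → ℝ)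
    (h : Fin s → Fin K → ℂ) (x : Fin s → Fin N → ℂ)
    (h' : Fin s → Fin K → ℂ) (x' : Fin s → Fin N → ℂ) : ℝ :=
  ∑ i, vnormSq (fun k => gradH b a h0 x0 e ρ μ dd h' x' i k - gradH b a h0 x0 e ρ μ dd h x i k)
  + ∑ i, vnormSq (fun j => gradX b a h0 x0 e ρ μ dd h' x' i j - gradX b a h0 x0 e ρ μ dd h x i j)

/-- Membership in `𝒩_d`. -/
def inNd {K N s : ℕ} (d0 : Fin s → ℝ)
    (h : Fin s → Fin K → ℂ) (x : Fin s → Fin N → ℂ) : Prop :=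
  ∀ i, vnorm (h i) ≤ 2 * Real.sqrt (d0 i) ∧ vnorm (x i) ≤ 2 * Real.sqrt (d0 i)

/-- Membership in `𝒩_μ`. -/
def inNmu {K L s : ℕ} (b : Fin L → Fin K → ℂ) (d0 : Fin s → ℝ) (μ : ℝ)
    (h : Fin s → Fin K → ℂ) : Prop :=
  ∀ i, ∀ l, Real.sqrt L * ‖vinner (b l) (h i)‖ ≤ 4 * Real.sqrt (d0 i) * μ

/-- `δᵢ(hᵢ,xᵢ) = ‖hᵢxᵢ* − h_{i0}x_{i0}*‖_F / d_{i0}`. -/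
def deltaI {K N : ℕ} (h0i : Fin K → ℂ) (x0i : Fin N → ℂ) (d0i : ℝ)
    (hi : Fin K → ℂ) (xi : Fin N → ℂ) : ℝ :=
  frob (rankOne hi xi - rankOne h0i x0i) / d0i

/-- Membership in `𝒩_ε`. -/
def inNeps {K N s : ℕ} (h0 : Fin s → Fin K → ℂ) (x0 : Fin s → Fin N → ℂ)
    (d0 : Fin s → ℝ) (ε : ℝ)
    (h : Fin s → Fin K → ℂ) (x : Fin s → Fin N → ℂ) : Prop :=
  ∀ i, deltaI (h0 i) (x0 i) (d0 i) (h i) (x i) ≤ ε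

/-- The global relative error `δ(h,x) = ‖ℋ(h,x) − X₀‖_F / d₀`. -/
def deltaTot {K N s : ℕ} (h0 : Fin s → Fin K → ℂ) (x0 : Fin s → Fin N → ℂ)
    (d0 : Fin s → ℝ)
    (h : Fin s → Fin K → ℂ) (x : Fin s → Fin N → ℂ) : ℝ :=
  famFrob (fun i => Hmap h x i - Hmap h0 x0 i) / dtot d0

/-- Membership in `𝒩_F̃`. -/
def inNF {K N L s : ℕ} (b : Fin L → Fin K → ℂ) (a : Fin s → Fin L → Fin N → ℂ)
    (h0 : Fin s → Fin K → ℂ) (x0 : Fin s → Fin N → ℂ) (e : Fin L → ℂ)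
    (d0 : Fin s → ℝ) (ρ μ : ℝ) (dd : Fin s → ℝ) (ε : ℝ)
    (h : Fin s → Fin K → ℂ) (x : Fin s → Fin N → ℂ) : Prop :=
  Ftil b a h0 x0 e ρ μ dd h x ≤ ε ^ 2 * dtot d0 ^ 2 / (3 * (s : ℝ) * kappa d0 ^ 2) + vnormSq e

/-- The Local Restricted Isometry Property on `𝒩_d ∩ 𝒩_μ ∩ 𝒩_ε`. -/
def LocalRIP {K N L s : ℕ} (b : Fin L → Fin K → ℂ) (a : Fin s → Fin L → Fin N → ℂ)
    (h0 : Fin s → Fin K → ℂ) (x0 : Fin s → Fin N → ℂ)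
    (d0 : Fin s → ℝ) (μ ε : ℝ) : Prop :=
  ∀ (h : Fin s → Fin K → ℂ) (x : Fin s → Fin N → ℂ),
    inNd d0 h x → inNmu b d0 μ h → inNeps h0 x0 d0 ε h x →
      (2 / 3) * famFrobSq (fun i => Hmap h x i - Hmap h0 x0 i)
          ≤ vnormSq (calA b a fun i => Hmap h x i - Hmap h0 x0 i)
      ∧ vnormSq (calA b a fun i => Hmap h x i - Hmap h0 x0 i)
          ≤ (3 / 2) * famFrobSq (fun i => Hmap h x i - Hmap h0 x0 i)

/-- `α_{i1} = ⟨h_{i0}, hᵢ⟩ / d_{i0}`. -/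
def alpha1 {K s : ℕ} (h0 : Fin s → Fin K → ℂ) (d0 : Fin s → ℝ)
    (h : Fin s → Fin K → ℂ) (i : Fin s) : ℂ :=
  vinner (h0 i) (h i) / ((d0 i : ℝ) : ℂ)

/-- `α_{i2} = ⟨x_{i0}, xᵢ⟩ / d_{i0}`. -/
def alpha2 {N s : ℕ} (x0 : Fin s → Fin N → ℂ) (d0 : Fin s → ℝ)
    (x : Fin s → Fin N → ℂ) (i : Fin s) : ℂ :=
  vinner (x0 i) (x i) / ((d0 i : ℝ) : ℂ)

/-- `δ₀ = δ/10`. -/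
def delta0 {K N s : ℕ} (h0 : Fin s → Fin K → ℂ) (x0 : Fin s → Fin N → ℂ)
    (d0 : Fin s → ℝ) (h : Fin s → Fin K → ℂ) (x : Fin s → Fin N → ℂ) : ℝ :=
  deltaTot h0 x0 d0 h x / 10

/-- `αᵢ = (1−δ₀)α_{i1}` if `‖hᵢ‖ ≥ ‖xᵢ‖`, else `1/((1−δ₀) conj(α_{i2}))`. -/
def alphaC {K N s : ℕ} (h0 : Fin s → Fin K → ℂ) (x0 : Fin s → Fin N → ℂ)
    (d0 : Fin s → ℝ) (h : Fin s → Fin K → ℂ) (x : Fin s → Fin N → ℂ) (i : Fin s) : ℂ :=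
  if vnorm (x i) ≤ vnorm (h i)
  then ((1 - delta0 h0 x0 d0 h x : ℝ) : ℂ) * alpha1 h0 d0 h i
  else 1 / (((1 - delta0 h0 x0 d0 h x : ℝ) : ℂ) * conj (alpha2 x0 d0 x i))

/-- `Δhᵢ = hᵢ − αᵢ h_{i0}`. -/
def dh {K N s : ℕ} (h0 : Fin s → Fin K → ℂ) (x0 : Fin s → Fin N → ℂ)
    (d0 : Fin s → ℝ) (h : Fin s → Fin K → ℂ) (x : Fin s → Fin N → ℂ) (i : Fin s) :
    Fin K → ℂ :=
  fun k => h i k - alphaC h0 x0 d0 h x i * h0 i k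

/-- `Δxᵢ = xᵢ − conj(αᵢ)⁻¹ x_{i0}`. -/
def dx {K N s : ℕ} (h0 : Fin s → Fin K → ℂ) (x0 : Fin s → Fin N → ℂ)
    (d0 : Fin s → ℝ) (h : Fin s → Fin K → ℂ) (x : Fin s → Fin N → ℂ) (i : Fin s) :
    Fin N → ℂ :=
  fun j => x i j - (conj (alphaC h0 x0 d0 h x i))⁻¹ * x0 i j

/-- `σ²_max(h,x) = maxₗ Σᵢ |bₗ*hᵢ|² ‖xᵢ‖²`. -/
def sigmaMaxSq {K N L s : ℕ} (b : Fin L → Fin K → ℂ)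
    (h : Fin s → Fin K → ℂ) (x : Fin s → Fin N → ℂ) : ℝ :=
  ⨆ l : Fin L, ∑ i, ‖vinner (b l) (h i)‖ ^ 2 * vnormSq (x i)

/-- The rank-one bound (Lemma: `𝒜` on block-diagonal matrices with rank-1 blocks). -/
def RankOneBound {K N L s : ℕ} (b : Fin L → Fin K → ℂ)
    (a : Fin s → Fin L → Fin N → ℂ) : Prop :=
  ∀ (h : Fin s → Fin K → ℂ) (x : Fin s → Fin N → ℂ),
    vnormSq (calA b a (Hmap h x)) ≤
      4 / 3 * famFrobSq (Hmap h x)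
      + 2 * Real.sqrt (2 * (s : ℝ) * famFrobSq (Hmap h x) * sigmaMaxSq b h x
          * ((K : ℝ) + N) * Real.log L)
      + 8 * (s : ℝ) * sigmaMaxSq b h x * ((K : ℝ) + N) * Real.log L

/-- The subspace `Tᵢ = {h_{i0} v* + u x_{i0}*}`. -/
def Tspace {K N : ℕ} (h0i : Fin K → ℂ) (x0i : Fin N → ℂ) :
    Set (Matrix (Fin K) (Fin N) ℂ) :=
  {Z | ∃ (u : Fin K → ℂ) (v : Fin N → ℂ), Z = rankOne h0i v + rankOne u x0i}

/-- `P` is the orthogonal projection onto `Tᵢ` w.r.t. the Frobenius inner product. -/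
def IsFrobProj {K N : ℕ} (h0i : Fin K → ℂ) (x0i : Fin N → ℂ)
    (P : Matrix (Fin K) (Fin N) ℂ → Matrix (Fin K) (Fin N) ℂ) : Prop :=
  ∀ Z, P Z ∈ Tspace h0i x0i ∧ ∀ W ∈ Tspace h0i x0i, finner W (Z - P Z) = 0

/-- Operator norm of `𝒜ᵢ` from `(ℂ^{K×N}, ‖·‖_F)` to `(ℂ^L, ‖·‖)`. -/
def calAiOpNorm {K N L : ℕ} (b : Fin L → Fin K → ℂ) (a : Fin L → Fin N → ℂ) : ℝ :=
  sSup {r : ℝ | ∃ Z : Matrix (Fin K) (Fin N) ℂ, frob Z ≤ 1 ∧ r = vnorm (calAi b a Z)}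

/-- Operator norm of `𝒜` from block-diagonal matrices with `‖·‖_F` to `ℂ^L`. -/
def calAOpNorm {K N L s : ℕ} (b : Fin L → Fin K → ℂ)
    (a : Fin s → Fin L → Fin N → ℂ) : ℝ :=
  sSup {r : ℝ | ∃ Z : Fin s → Matrix (Fin K) (Fin N) ℂ, famFrob Z ≤ 1 ∧ r = vnorm (calA b a Z)}

/-- Norm of a stacked vector in `ℂ^{ns}`. -/
def stackNorm {n s : ℕ} (u : Fin s → Fin n → ℂ) : ℝ := Real.sqrt (∑ i, vnormSq (u i))

/-- Norm of a point `z = (h,x) ∈ ℂ^{s(K+N)}`. -/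
def pairNorm {K N s : ℕ} (u : Fin s → Fin K → ℂ) (v : Fin s → Fin N → ℂ) : ℝ :=
  Real.sqrt (∑ i, vnormSq (u i) + ∑ i, vnormSq (v i))

/-- `z + t • w` componentwise, `t` real. -/
def shiftV {n s : ℕ} (u w : Fin s → Fin n → ℂ) (t : ℝ) : Fin s → Fin n → ℂ :=
  fun i k => u i k + (t : ℂ) * w i k

/-- `σ_max(h) = maxₗ √(Σᵢ |bₗ*hᵢ|²)` (unit `xᵢ`'s). -/
def sigmaMaxU {K L s : ℕ} (b : Fin L → Fin K → ℂ) (h : Fin s → Fin K → ℂ) : ℝ :=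
  ⨆ l, Real.sqrt (∑ i, ‖vinner (b l) (h i)‖ ^ 2)

section Helpers

variable {n K N L s : ℕ}

lemma vnormSq_nonneg (v : Fin n → ℂ) : 0 ≤ vnormSq v :=
  Finset.sum_nonneg fun _ _ => pow_nonneg (norm_nonneg _) 2

lemma vnorm_nonneg (v : Fin n → ℂ) : 0 ≤ vnorm v := Real.sqrt_nonneg _

lemma vnorm_sq (v : Fin n → ℂ) : vnorm v ^ 2 = vnormSq v := Real.sq_sqrt (vnormSq_nonneg v)

lemma frobSq_nonneg (Z : Matrix (Fin K) (Fin N) ℂ) : 0 ≤ frobSq Z :=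
  Finset.sum_nonneg fun _ _ => Finset.sum_nonneg fun _ _ => pow_nonneg (norm_nonneg _) 2

lemma frob_nonneg (Z : Matrix (Fin K) (Fin N) ℂ) : 0 ≤ frob Z := Real.sqrt_nonneg _

lemma frob_sq (Z : Matrix (Fin K) (Fin N) ℂ) : frob Z ^ 2 = frobSq Z := Real.sq_sqrt (frobSq_nonneg Z)

lemma famFrobSq_nonneg (Z : Fin s → Matrix (Fin K) (Fin N) ℂ) : 0 ≤ famFrobSq Z :=
  Finset.sum_nonneg fun _ _ => frobSq_nonneg _

lemma famFrob_nonneg (Z : Fin s → Matrix (Fin K) (Fin N) ℂ) : 0 ≤ famFrob Z := Real.sqrt_nonneg _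

lemma famFrob_sq (Z : Fin s → Matrix (Fin K) (Fin N) ℂ) : famFrob Z ^ 2 = famFrobSq Z :=
  Real.sq_sqrt (famFrobSq_nonneg Z)

def toE (v : Fin n → ℂ) : EuclideanSpace ℂ (Fin n) := WithLp.toLp 2 v

lemma norm_toE (v : Fin n → ℂ) : ‖toE v‖ = vnorm v := by
  rw [EuclideanSpace.norm_eq]; rfl

lemma inner_toE (u v : Fin n → ℂ) : (inner ℂ (toE u) (toE v) : ℂ) = vinner u v := by
  rw [PiLp.inner_apply]; simp [toE, vinner, RCLike.inner_apply, mul_comm]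

lemma toE_add (u v : Fin n → ℂ) : toE (fun j => u j + v j) = toE u + toE v := rfl
lemma toE_sub (u v : Fin n → ℂ) : toE (fun j => u j - v j) = toE u - toE v := rfl
lemma toE_smul (c : ℂ) (v : Fin n → ℂ) : toE (fun j => c * v j) = c • toE v := rfl

def toEM (Z : Matrix (Fin K) (Fin N) ℂ) : EuclideanSpace ℂ (Fin K × Fin N) :=
  WithLp.toLp 2 (fun p : Fin K × Fin N => Z p.1 p.2)

lemma norm_toEM (Z : Matrix (Fin K) (Fin N) ℂ) : ‖toEM Z‖ = frob Z := by
  rw [EuclideanSpace.norm_eq, Fintype.sum_prod_type]; rfl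

lemma inner_toEM (U V : Matrix (Fin K) (Fin N) ℂ) :
    (inner ℂ (toEM U) (toEM V) : ℂ) = finner U V := by
  rw [PiLp.inner_apply, Fintype.sum_prod_type, finner]
  simp [toEM, RCLike.inner_apply, mul_comm]

lemma toEM_add (U V : Matrix (Fin K) (Fin N) ℂ) : toEM (U + V) = toEM U + toEM V := rfl
lemma toEM_sub (U V : Matrix (Fin K) (Fin N) ℂ) : toEM (U - V) = toEM U - toEM V := rfl

def toEF (Z : Fin s → Matrix (Fin K) (Fin N) ℂ) :
    EuclideanSpace ℂ (Fin s × Fin K × Fin N) := WithLp.toLp 2 (fun p : Fin s × Fin K × Fin N => Z p.1 p.2.1 p.2.2)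

lemma norm_toEF (Z : Fin s → Matrix (Fin K) (Fin N) ℂ) : ‖toEF Z‖ = famFrob Z := by
  rw [EuclideanSpace.norm_eq, famFrob, famFrobSq]
  rw [Fintype.sum_prod_type]
  congr 1
  refine Finset.sum_congr rfl fun i _ => ?_
  rw [Fintype.sum_prod_type]; rfl

lemma toEF_sub (U V : Fin s → Matrix (Fin K) (Fin N) ℂ) :
    toEF (fun i => U i - V i) = toEF U - toEF V := rfl

lemma vinner_self (v : Fin n → ℂ) : vinner v v = (vnormSq v : ℝ) := by
  rw [vinner, vnormSq]
  push_cast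
  refine Finset.sum_congr rfl fun j _ => ?_
  rw [RCLike.conj_mul]; norm_cast

lemma finner_self (Z : Matrix (Fin K) (Fin N) ℂ) : finner Z Z = (frobSq Z : ℝ) := by
  rw [finner, frobSq]
  push_cast
  refine Finset.sum_congr rfl fun k _ => Finset.sum_congr rfl fun j _ => ?_
  rw [RCLike.conj_mul]; norm_cast

lemma vinner_conj_symm (u v : Fin n → ℂ) : vinner u v = conj (vinner v u) := by
  rw [vinner, vinner, map_sum]
  refine Finset.sum_congr rfl fun j _ => ?_
  rw [map_mul, Complex.conj_conj, mul_comm]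

lemma vinner_sub_smul (u v w : Fin n → ℂ) (c : ℂ) :
    vinner u (fun k => v k - c * w k) = vinner u v - c * vinner u w := by
  simp only [vinner, mul_sub, Finset.sum_sub_distrib, Finset.mul_sum]
  congr 1
  exact Finset.sum_congr rfl fun j _ => by ring

lemma norm_vinner_le (u v : Fin n → ℂ) : ‖vinner u v‖ ≤ vnorm u * vnorm v := by
  rw [← inner_toE, ← norm_toE, ← norm_toE]
  exact norm_inner_le_norm _ _

lemma frobSq_rankOne (u : Fin K → ℂ) (v : Fin N → ℂ) :
    frobSq (rankOne u v) = vnormSq u * vnormSq v := by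
  rw [frobSq, vnormSq, vnormSq, Finset.sum_mul_sum]
  refine Finset.sum_congr rfl fun k _ => Finset.sum_congr rfl fun j _ => ?_
  rw [rankOne, Matrix.of_apply, norm_mul, mul_pow, RCLike.norm_conj]

lemma frob_rankOne (u : Fin K → ℂ) (v : Fin N → ℂ) :
    frob (rankOne u v) = vnorm u * vnorm v := by
  rw [frob, frobSq_rankOne, vnorm, vnorm, Real.sqrt_mul (vnormSq_nonneg u)]

lemma finner_rankOne (u u' : Fin K → ℂ) (v v' : Fin N → ℂ) :
    finner (rankOne u v) (rankOne u' v') = vinner u u' * conj (vinner v v') := by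
  rw [finner, vinner, vinner, map_sum, Finset.sum_mul_sum]
  refine Finset.sum_congr rfl fun k _ => Finset.sum_congr rfl fun j _ => ?_
  simp only [rankOne, Matrix.of_apply, map_mul, Complex.conj_conj]
  ring

lemma frobSq_add_of_orth (X Y : Matrix (Fin K) (Fin N) ℂ) (hor : finner X Y = 0) :
    frobSq (X + Y) = frobSq X + frobSq Y := by
  have h1 : ‖toEM (X + Y)‖ ^ 2 = ‖toEM X‖^2 + 2 * RCLike.re (inner ℂ (toEM X) (toEM Y) : ℂ) + ‖toEM Y‖^2 := by
    rw [toEM_add]; exact norm_add_sq _ _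
  rw [inner_toEM, hor] at h1
  simp only [map_zero, mul_zero, add_zero] at h1
  rw [norm_toEM, norm_toEM, norm_toEM, frob_sq, frob_sq, frob_sq] at h1
  linarith

lemma calAi_add (b : Fin L → Fin K → ℂ) (ai : Fin L → Fin N → ℂ)
    (X Y : Matrix (Fin K) (Fin N) ℂ) (l : Fin L) :
    calAi b ai (X + Y) l = calAi b ai X l + calAi b ai Y l := by
  simp only [calAi, Matrix.add_mulVec, vinner, Pi.add_apply, mul_add,
    Finset.sum_add_distrib]

lemma vnorm_eq_zero_iff (v : Fin n → ℂ) : vnormSq v = 0 → ∀ j, v j = 0 := by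
  intro hv j
  have := (Finset.sum_eq_zero_iff_of_nonneg
    (fun j _ => pow_nonneg (norm_nonneg (v j)) 2)).1 hv j (Finset.mem_univ j)
  have := pow_eq_zero_iff (n := 2) (by norm_num) |>.1 this
  exact norm_eq_zero.1 this

lemma frobSq_eq_zero_iff (Z : Matrix (Fin K) (Fin N) ℂ) : frobSq Z = 0 → Z = 0 := by
  intro hz
  ext k j
  have hk := (Finset.sum_eq_zero_iff_of_nonneg
    (fun k _ => Finset.sum_nonneg fun j _ => pow_nonneg (norm_nonneg _) 2)).1 hz k
    (Finset.mem_univ k)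
  have hj := (Finset.sum_eq_zero_iff_of_nonneg
    (fun j _ => pow_nonneg (norm_nonneg _) 2)).1 hk j (Finset.mem_univ j)
  have := pow_eq_zero_iff (n := 2) (by norm_num) |>.1 hj
  simpa using norm_eq_zero.1 this

lemma rankOne_sub_left (u u' : Fin K → ℂ) (v : Fin N → ℂ) :
    rankOne u v - rankOne u' v = rankOne (fun k => u k - u' k) v := by
  ext k j; simp [rankOne, sub_mul]

lemma rankOne_sub_right (u : Fin K → ℂ) (v v' : Fin N → ℂ) :
    rankOne u v - rankOne u v' = rankOne u (fun j => v j - v' j) := by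
  ext k j; simp [rankOne, mul_sub]

lemma Tspace_sub {h0i : Fin K → ℂ} {x0i : Fin N → ℂ}
    {X Y : Matrix (Fin K) (Fin N) ℂ} (hX : X ∈ Tspace h0i x0i) (hY : Y ∈ Tspace h0i x0i) :
    X - Y ∈ Tspace h0i x0i := by
  obtain ⟨u, v, rfl⟩ := hX
  obtain ⟨u', v', rfl⟩ := hY
  refine ⟨fun k => u k - u' k, fun j => v j - v' j, ?_⟩
  ext k j
  simp [rankOne, map_sub]
  ring

lemma proj_fix {h0i : Fin K → ℂ} {x0i : Fin N → ℂ}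
    {Pi : Matrix (Fin K) (Fin N) ℂ → Matrix (Fin K) (Fin N) ℂ}
    (hP : IsFrobProj h0i x0i Pi) {W : Matrix (Fin K) (Fin N) ℂ}
    (hW : W ∈ Tspace h0i x0i) : Pi W = W := by
  obtain ⟨hmem, horth⟩ := hP W
  have hsub : W - Pi W ∈ Tspace h0i x0i := Tspace_sub hW hmem
  have h0 := horth _ hsub
  rw [finner_self] at h0
  have : frobSq (W - Pi W) = 0 := by exact_mod_cast h0
  have := frobSq_eq_zero_iff _ this
  rw [sub_eq_zero] at this
  exact this.symm

end Helpers
set_option maxHeartbeats 1000000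
section Block

variable {K N : ℕ}

lemma le_of_sq_le_sq' {a b : ℝ} (ha : 0 ≤ a) (hb : 0 ≤ b) (h : a ^ 2 ≤ b ^ 2) : a ≤ b := by
  nlinarith [sq_nonneg (a - b), sq_nonneg (a + b)]

lemma blockLemma (d : ℝ) (hd : 0 < d)
    (h0i : Fin K → ℂ) (x0i : Fin N → ℂ) (hi : Fin K → ℂ) (xi : Fin N → ℂ)
    (hh0 : vnorm h0i = Real.sqrt d) (hx0 : vnorm x0i = Real.sqrt d)
    (hhi : vnorm hi ≤ 2 * Real.sqrt d) (hxi : vnorm xi ≤ 2 * Real.sqrt d)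
    (hr : frob (rankOne hi xi - rankOne h0i x0i) ≤ d / 15)
    (α : ℂ) (hα : α = vinner h0i hi / ((d : ℝ) : ℂ)) :
    frob (rankOne (fun k => hi k - α * h0i k) (fun j => xi j - (conj α)⁻¹ * x0i j))
        ≤ frob (rankOne hi xi - rankOne h0i x0i) / 28
    ∧ vnormSq (fun j => xi j - (conj α)⁻¹ * x0i j) * d
        ≤ (225 / 49) * frob (rankOne hi xi - rankOne h0i x0i) ^ 2
    ∧ ‖α‖ ≤ 2
    ∧ (rankOne hi xi - rankOne h0i x0i)
        - rankOne (fun k => hi k - α * h0i k) (fun j => xi j - (conj α)⁻¹ * x0i j)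
        ∈ Tspace h0i x0i := by
  set Zi := rankOne hi xi - rankOne h0i x0i with hZi
  set r := frob Zi with hrr
  have hr0 : 0 ≤ r := frob_nonneg _
  have hsd : 0 < Real.sqrt d := Real.sqrt_pos.2 hd
  have hsd2 : Real.sqrt d * Real.sqrt d = d := Real.mul_self_sqrt hd.le
  set Δh : Fin K → ℂ := fun k => hi k - α * h0i k with hΔh
  set w : Fin N → ℂ := fun j => conj α * xi j - x0i j with hw
  set Δx : Fin N → ℂ := fun j => xi j - (conj α)⁻¹ * x0i j with hΔx
  have hd0 : vinner h0i h0i = ((d : ℝ) : ℂ) := by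
    rw [vinner_self]
    norm_cast
    rw [← vnorm_sq, hh0, Real.sq_sqrt hd.le]
  have hdC : ((d : ℝ) : ℂ) ≠ 0 := by
    simpa using hd.ne'
  have horthv : vinner h0i Δh = 0 := by
    rw [hΔh, vinner_sub_smul, hd0, hα]
    field_simp
    ring
  have hdec : Zi = rankOne Δh xi + rankOne h0i w := by
    ext k j
    simp only [hZi, Matrix.sub_apply, Matrix.add_apply, rankOne, Matrix.of_apply,
      hΔh, hw, map_sub, map_mul, Complex.conj_conj]
    ring
  have hpyth : vnormSq Δh * vnormSq xi + d * vnormSq w = r ^ 2 := by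
    have hor : finner (rankOne Δh xi) (rankOne h0i w) = 0 := by
      rw [finner_rankOne]
      have h1 : vinner Δh h0i = 0 := by rw [vinner_conj_symm, horthv, map_zero]
      rw [h1, zero_mul]
    have h2 := frobSq_add_of_orth (rankOne Δh xi) (rankOne h0i w) hor
    rw [← hdec, frobSq_rankOne, frobSq_rankOne] at h2
    have hx0sq : vnormSq h0i = d := by rw [← vnorm_sq, hh0, Real.sq_sqrt hd.le]
    rw [hx0sq] at h2
    rw [hrr, frob_sq]
    linarith
  have hwnn : 0 ≤ vnorm w := vnorm_nonneg w
  have hΔhnn : 0 ≤ vnorm Δh := vnorm_nonneg Δh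
  have hΔxnn : 0 ≤ vnorm Δx := vnorm_nonneg Δx
  have hxinn : 0 ≤ vnorm xi := vnorm_nonneg xi
  -- ‖w‖ √d ≤ r
  have hwle : vnorm w * Real.sqrt d ≤ r := by
    refine le_of_sq_le_sq' (mul_nonneg hwnn hsd.le) hr0 ?_
    rw [mul_pow, vnorm_sq, Real.sq_sqrt hd.le]
    nlinarith [mul_nonneg (vnormSq_nonneg Δh) (vnormSq_nonneg xi)]
  -- ‖w‖ ≤ √d / 15
  have hw15 : vnorm w ≤ Real.sqrt d / 15 := by
    rw [le_div_iff₀ (by norm_num : (0:ℝ) < 15)]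
    have : vnorm w * Real.sqrt d * Real.sqrt d ≤ r * Real.sqrt d :=
      mul_le_mul_of_nonneg_right hwle hsd.le
    have h3 : r * Real.sqrt d ≤ (d / 15) * Real.sqrt d :=
      mul_le_mul_of_nonneg_right hr hsd.le
    nlinarith
  set m := ‖α‖ with hm
  have hmnn : 0 ≤ m := norm_nonneg _
  -- m ‖xi‖ ≥ (14/15) √d
  have hmxi : (14 / 15) * Real.sqrt d ≤ m * vnorm xi := by
    have hxe : conj α • toE xi = toE x0i + toE w := by
      ext j
      show conj α * xi j = x0i j + (conj α * xi j - x0i j)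
      ring
    have h4 : m * vnorm xi = ‖conj α • toE xi‖ := by
      rw [norm_smul, RCLike.norm_conj, norm_toE]
    have h5 : ‖toE x0i + toE w‖ ≥ ‖toE x0i‖ - ‖toE w‖ := by
      have h5a := norm_sub_le (toE x0i + toE w) (toE w)
      simp only [add_sub_cancel_right] at h5a
      linarith
    rw [h4, hxe]
    rw [norm_toE, norm_toE, hx0] at h5
    linarith
  -- m ≥ 7/15, α ≠ 0
  have hm715 : (7 / 15 : ℝ) ≤ m := by
    have : m * vnorm xi ≤ m * (2 * Real.sqrt d) := by
      exact mul_le_mul_of_nonneg_left hxi hmnn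
    nlinarith
  have hαne : α ≠ 0 := by
    intro h6; rw [h6] at hm; simp at hm; rw [hm] at hm715; norm_num at hm715
  have hcαne : conj α ≠ 0 := by simpa using hαne
  -- Δx = (conj α)⁻¹ • w
  have hΔxw : toE Δx = (conj α)⁻¹ • toE w := by
    ext j
    show xi j - (conj α)⁻¹ * x0i j = (conj α)⁻¹ * (conj α * xi j - x0i j)
    field_simp
  have hΔxnorm : vnorm Δx * m = vnorm w := by
    have : vnorm Δx = m⁻¹ * vnorm w := by
      rw [← norm_toE, hΔxw, norm_smul, norm_inv, RCLike.norm_conj, norm_toE]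
    rw [this]
    field_simp [show m ≠ 0 by intro h7; rw [h7] at hm715; norm_num at hm715]
  -- Goal 2 : ‖Δx‖² d ≤ (225/49) r²
  have goal2 : vnormSq Δx * d ≤ (225 / 49) * r ^ 2 := by
    have h8 : vnorm Δx * Real.sqrt d ≤ (15 / 7) * r := by
      have h9 : (7 / 15) * (vnorm Δx * Real.sqrt d) ≤ m * (vnorm Δx * Real.sqrt d) :=
        mul_le_mul_of_nonneg_right hm715 (mul_nonneg hΔxnn hsd.le)
      have h10 : m * (vnorm Δx * Real.sqrt d) = vnorm w * Real.sqrt d := by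
        rw [← hΔxnorm]; ring
      linarith
    have h11 : (vnorm Δx * Real.sqrt d) ^ 2 ≤ ((15 / 7) * r) ^ 2 := by
      refine pow_le_pow_left₀ (mul_nonneg hΔxnn hsd.le) h8 2
    rw [mul_pow, vnorm_sq, Real.sq_sqrt hd.le] at h11
    nlinarith
  -- Goal 1 : frob V ≤ r/28
  have goal1 : frob (rankOne Δh Δx) ≤ r / 28 := by
    rw [frob_rankOne]
    set a := vnorm Δh * vnorm xi with ha
    set bb := Real.sqrt d * vnorm w with hbb
    have hab : a ^ 2 + bb ^ 2 = r ^ 2 := by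
      rw [ha, hbb, mul_pow, mul_pow, vnorm_sq, vnorm_sq, vnorm_sq, Real.sq_sqrt hd.le]
      linarith [hpyth]
    have habr : a * bb ≤ r ^ 2 / 2 := by nlinarith [sq_nonneg (a - bb)]
    -- frobV * (m * ‖xi‖ * √d) = a * bb
    have hkey : (vnorm Δh * vnorm Δx) * (m * vnorm xi * Real.sqrt d) = a * bb := by
      rw [ha, hbb, ← hΔxnorm]
      ring
    have hge : (14 / 15) * d ≤ m * vnorm xi * Real.sqrt d := by
      have := mul_le_mul_of_nonneg_right hmxi hsd.le
      nlinarith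
    have hfnn : 0 ≤ vnorm Δh * vnorm Δx := mul_nonneg hΔhnn hΔxnn
    have h12 : (vnorm Δh * vnorm Δx) * ((14 / 15) * d) ≤ a * bb := by
      calc (vnorm Δh * vnorm Δx) * ((14 / 15) * d)
          ≤ (vnorm Δh * vnorm Δx) * (m * vnorm xi * Real.sqrt d) :=
            mul_le_mul_of_nonneg_left hge hfnn
        _ = a * bb := hkey
    nlinarith
  -- Goal 3 : ‖α‖ ≤ 2
  have goal3 : m ≤ 2 := by
    have h13 : ‖vinner h0i hi‖ ≤ vnorm h0i * vnorm hi := norm_vinner_le _ _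
    have h14 : m = ‖vinner h0i hi‖ / d := by
      rw [hm, hα, norm_div]
      norm_num [abs_of_pos hd]
    rw [h14, div_le_iff₀ hd]
    calc ‖vinner h0i hi‖ ≤ vnorm h0i * vnorm hi := h13
      _ ≤ Real.sqrt d * (2 * Real.sqrt d) := by
          rw [hh0]
          exact mul_le_mul_of_nonneg_left hhi hsd.le
      _ = 2 * d := by nlinarith
  -- Goal 4 : membership
  have goal4 : Zi - rankOne Δh Δx ∈ Tspace h0i x0i := by
    refine ⟨fun k => α⁻¹ * hi k - h0i k, w, ?_⟩
    ext k j
    simp only [hZi, Matrix.sub_apply, Matrix.add_apply, rankOne, Matrix.of_apply,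
      hΔh, hΔx, hw, map_sub, map_mul, map_inv₀, Complex.conj_conj]
    field_simp
    ring
  exact ⟨goal1, goal2, goal3, goal4⟩

end Block
set_option maxHeartbeats 2000000 in
/-- the local restricted isometry property. -/
theorem statement10 :
    ∃ C : ℝ, 0 < C ∧
      ∀ (K N L s : ℕ), 0 < K → 0 < N → 0 < L → 0 < s →
      ∀ b : Fin L → Fin K → ℂ, BtBeqI b → (∀ l, vnormSq (b l) = (K : ℝ) / L) →
      ∀ (a : Fin s → Fin L → Fin N → ℂ)
        (h0 : Fin s → Fin K → ℂ) (x0 : Fin s → Fin N → ℂ) (d0 : Fin s → ℝ),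
        (∀ i, 0 < d0 i) → (∀ i, vnorm (h0 i) = Real.sqrt (d0 i)) →
        (∀ i, vnorm (x0 i) = Real.sqrt (d0 i)) →
      ∀ μ ε : ℝ, 0 < μ → muhLe b h0 μ → 0 < ε → ε ≤ 1 / 15 →
        C * μ ^ 2 * (s : ℝ) * ((K : ℝ) + (N : ℝ)) * Real.log L ^ 2 ≤ (L : ℝ) →
      ∀ P : Fin s → Matrix (Fin K) (Fin N) ℂ → Matrix (Fin K) (Fin N) ℂ,
        (∀ i, IsFrobProj (h0 i) (x0 i) (P i)) →
        (∀ Z : Fin s → Matrix (Fin K) (Fin N) ℂ,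
          |vnormSq (calA b a fun i => P i (Z i)) - famFrobSq (fun i => P i (Z i))|
            ≤ 1 / 10 * famFrobSq Z) →
      RankOneBound b a →
      ∀ (h : Fin s → Fin K → ℂ) (x : Fin s → Fin N → ℂ),
        inNd d0 h x → inNmu b d0 μ h → inNeps h0 x0 d0 ε h x →
          2 / 3 * famFrobSq (fun i => Hmap h x i - Hmap h0 x0 i)
              ≤ vnormSq (calA b a fun i => Hmap h x i - Hmap h0 x0 i)
          ∧ vnormSq (calA b a fun i => Hmap h x i - Hmap h0 x0 i)
              ≤ 3 / 2 * famFrobSq (fun i => Hmap h x i - Hmap h0 x0 i) := by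
  refine ⟨10 ^ 7, by norm_num, ?_⟩
  intro K N L s hK hN hL hs b hB hbcols a h0 x0 d0 hd0 hh0 hx0 μ ε hμ hmuh hε0 hε15 hC
    P hP hRIP hR1 h x hNd hNmu hNeps
  haveI : Nonempty (Fin L) := ⟨⟨0, hL⟩⟩
  have hLpos : (0:ℝ) < L := by exact_mod_cast hL
  have hL1 : (1:ℝ) ≤ L := by exact_mod_cast hL
  set Z : Fin s → Matrix (Fin K) (Fin N) ℂ := fun i => Hmap h x i - Hmap h0 x0 i with hZdef
  set D2 : ℝ := famFrobSq Z with hD2def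
  have hD2nn : 0 ≤ D2 := famFrobSq_nonneg Z
  set α : Fin s → ℂ := fun i => vinner (h0 i) (h i) / ((d0 i : ℝ) : ℂ) with hαdef
  set Δh : Fin s → Fin K → ℂ := fun i k => h i k - α i * h0 i k with hΔhdef
  set Δx : Fin s → Fin N → ℂ := fun i j => x i j - (conj (α i))⁻¹ * x0 i j with hΔxdef
  have hZi : ∀ i, Z i = rankOne (h i) (x i) - rankOne (h0 i) (x0 i) := fun i => rfl
  -- per block smallness
  have hri : ∀ i, frob (rankOne (h i) (x i) - rankOne (h0 i) (x0 i)) ≤ d0 i / 15 := by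
    intro i
    have h1 := hNeps i
    rw [deltaI, div_le_iff₀ (hd0 i)] at h1
    nlinarith [frob_nonneg (rankOne (h i) (x i) - rankOne (h0 i) (x0 i)), hd0 i, hε0, hε15]
  have hblock := fun i => blockLemma (d0 i) (hd0 i) (h0 i) (x0 i) (h i) (x i)
      (hh0 i) (hx0 i) (hNd i).1 (hNd i).2 (hri i) (α i) rfl
  -- sums
  have hD2sum : ∑ i, frob (Z i) ^ 2 = D2 := by
    rw [hD2def, famFrobSq]
    exact Finset.sum_congr rfl fun i _ => frob_sq (Z i)
  -- V bound
  have hVper : ∀ i, frobSq (rankOne (Δh i) (Δx i)) ≤ frob (Z i) ^ 2 / 784 := by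
    intro i
    have h1 : frob (rankOne (Δh i) (Δx i)) ≤ frob (Z i) / 28 := (hblock i).1
    have h2 := pow_le_pow_left₀ (frob_nonneg (rankOne (Δh i) (Δx i))) h1 2
    rw [div_pow, frob_sq] at h2
    norm_num at h2 ⊢
    linarith
  have hV2 : famFrobSq (Hmap Δh Δx) ≤ D2 / 784 := by
    calc famFrobSq (Hmap Δh Δx) = ∑ i, frobSq (rankOne (Δh i) (Δx i)) := rfl
      _ ≤ ∑ i, frob (Z i) ^ 2 / 784 := Finset.sum_le_sum fun i _ => hVper i
      _ = D2 / 784 := by rw [← Finset.sum_div, hD2sum]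
  have hV2nn : 0 ≤ famFrobSq (Hmap Δh Δx) := famFrobSq_nonneg _
  -- mu bound on Δh
  have hn2 : ∀ i l, ‖vinner (b l) (Δh i)‖ ^ 2 * (L : ℝ) ≤ 36 * (μ ^ 2 * d0 i) := by
    intro i l
    have hsplit : vinner (b l) (Δh i) = vinner (b l) (h i) - α i * vinner (b l) (h0 i) :=
      vinner_sub_smul _ _ _ _
    have htri : ‖vinner (b l) (Δh i)‖ ≤ ‖vinner (b l) (h i)‖ + ‖α i‖ * ‖vinner (b l) (h0 i)‖ := by
      rw [hsplit]
      refine (norm_sub_le _ _).trans ?_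
      rw [norm_mul]
    have h1 := hNmu i l
    have h2 := hmuh i l
    rw [hh0 i] at h2
    have hα2 : ‖α i‖ ≤ 2 := (hblock i).2.2.1
    have hsL : 0 ≤ Real.sqrt L := Real.sqrt_nonneg _
    have hsd : 0 ≤ Real.sqrt (d0 i) := Real.sqrt_nonneg _
    have h3 : Real.sqrt L * ‖vinner (b l) (Δh i)‖ ≤ 6 * (μ * Real.sqrt (d0 i)) := by
      nlinarith [htri, h1, h2, hsL, norm_nonneg (vinner (b l) (h0 i)),
        norm_nonneg (vinner (b l) (h i)), norm_nonneg (α i),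
        mul_le_mul hα2 h2 (mul_nonneg hsL (norm_nonneg _)) (by norm_num : (0:ℝ) ≤ 2),
        mul_nonneg hsL (norm_nonneg (vinner (b l) (Δh i)))]
    have h5 := pow_le_pow_left₀ (mul_nonneg hsL (norm_nonneg _)) h3 2
    rw [mul_pow, Real.sq_sqrt (Nat.cast_nonneg L)] at h5
    have h6 : Real.sqrt (d0 i) ^ 2 = d0 i := Real.sq_sqrt (hd0 i).le
    nlinarith [h5, h6]
  -- sigma bound
  have hσ : sigmaMaxSq b Δh Δx ≤ 8100 / 49 * μ ^ 2 * D2 / L := by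
    refine ciSup_le fun l => ?_
    have hterm : ∀ i, ‖vinner (b l) (Δh i)‖ ^ 2 * vnormSq (Δx i)
        ≤ (8100 / 49 * μ ^ 2 * frob (Z i) ^ 2) / L := by
      intro i
      have t1 := hn2 i l
      have t2 : vnormSq (Δx i) * d0 i ≤ 225 / 49 * frob (Z i) ^ 2 := (hblock i).2.1
      rw [le_div_iff₀ hLpos]
      have hmul := mul_le_mul t1 t2 (mul_nonneg (vnormSq_nonneg _) (hd0 i).le)
        (by have := mul_nonneg (sq_nonneg μ) (hd0 i).le; linarith)
      have hcancel : ‖vinner (b l) (Δh i)‖ ^ 2 * vnormSq (Δx i) * (L : ℝ) * d0 i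
          ≤ 8100 / 49 * μ ^ 2 * frob (Z i) ^ 2 * d0 i := by nlinarith [hmul]
      exact le_of_mul_le_mul_right (by nlinarith [hcancel]) (hd0 i)
    calc ∑ i, ‖vinner (b l) (Δh i)‖ ^ 2 * vnormSq (Δx i)
        ≤ ∑ i, (8100 / 49 * μ ^ 2 * frob (Z i) ^ 2) / L :=
          Finset.sum_le_sum fun i _ => hterm i
      _ = 8100 / 49 * μ ^ 2 * D2 / L := by
          rw [← Finset.sum_div, ← Finset.mul_sum, hD2sum]
  have hσ0 : 0 ≤ sigmaMaxSq b Δh Δx :=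
    Real.iSup_nonneg fun l => Finset.sum_nonneg fun i _ =>
      mul_nonneg (pow_nonneg (norm_nonneg _) 2) (vnormSq_nonneg _)
  have hlog0 : 0 ≤ Real.log L := Real.log_nonneg hL1
  -- T3 bound
  have hT3nn : 0 ≤ 8 * (s:ℝ) * sigmaMaxSq b Δh Δx * ((K:ℝ) + N) * Real.log L := by positivity
  have hT3 : 8 * (s:ℝ) * sigmaMaxSq b Δh Δx * ((K:ℝ) + N) * Real.log L ≤ D2 / 500 := by
    rcases eq_or_lt_of_le hL1 with hL2 | hL2
    · have : Real.log L = 0 := by rw [← hL2, Real.log_one]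
      rw [this]
      simp
      positivity
    · have hlg2 : Real.log 2 ≤ Real.log L := by
        apply Real.log_le_log (by norm_num)
        have : (2:ℕ) ≤ L := by
          by_contra hcon
          push_neg at hcon
          interval_cases L <;> simp_all
        exact_mod_cast this
      have hlg : (0.6931471803 : ℝ) ≤ Real.log L := le_trans Real.log_two_gt_d9.le hlg2
      set lg := Real.log L with hlgdef
      set Qb : ℝ := μ ^ 2 * (s:ℝ) * ((K:ℝ) + N) with hQb
      have hQb0 : 0 ≤ Qb := by positivity
      have hQ0 : 0 ≤ Qb * lg := mul_nonneg hQb0 hlog0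
      have hC' : 10 ^ 7 * Qb * lg ^ 2 ≤ (L:ℝ) := by
        calc (10:ℝ) ^ 7 * Qb * lg ^ 2 = 10 ^ 7 * μ ^ 2 * (s:ℝ) * ((K:ℝ) + N) * lg ^ 2 := by ring
        _ ≤ (L:ℝ) := hC
      have key : 32400000 / 49 * (Qb * lg) ≤ (L:ℝ) := by
        nlinarith [mul_nonneg hQ0 (by linarith : (0:ℝ) ≤ lg - 0.6931471803)]
      have key' : 64800 / 49 * (Qb * lg) ≤ (L:ℝ) / 500 := by linarith
      have step1 : 8 * (s:ℝ) * sigmaMaxSq b Δh Δx * ((K:ℝ) + N) * lg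
          ≤ 8 * (s:ℝ) * ((K:ℝ) + N) * lg * (8100 / 49 * μ ^ 2 * D2 / L) := by
        have h8 : 0 ≤ 8 * (s:ℝ) * ((K:ℝ) + N) * lg := by positivity
        calc 8 * (s:ℝ) * sigmaMaxSq b Δh Δx * ((K:ℝ) + N) * lg
            = 8 * (s:ℝ) * ((K:ℝ) + N) * lg * sigmaMaxSq b Δh Δx := by ring
          _ ≤ 8 * (s:ℝ) * ((K:ℝ) + N) * lg * (8100 / 49 * μ ^ 2 * D2 / L) :=
              mul_le_mul_of_nonneg_left hσ h8
      have step2 : 8 * (s:ℝ) * ((K:ℝ) + N) * lg * (8100 / 49 * μ ^ 2 * D2 / L)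
          = 64800 / 49 * (Qb * lg) * (D2 / L) := by
        rw [hQb]; ring
      have hD2L : 0 ≤ D2 / (L:ℝ) := div_nonneg hD2nn hLpos.le
      have step3 : 64800 / 49 * (Qb * lg) * (D2 / L) ≤ (L:ℝ) / 500 * (D2 / L) :=
        mul_le_mul_of_nonneg_right key' hD2L
      have step4 : (L:ℝ) / 500 * (D2 / L) = D2 / 500 := by
        field_simp
      calc 8 * (s:ℝ) * sigmaMaxSq b Δh Δx * ((K:ℝ) + N) * lg
          ≤ (L:ℝ) / 500 * (D2 / L) := by rw [← step2] at step3; exact le_trans step1 step3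
        _ = D2 / 500 := step4
  -- rank-one bound application
  have hR1V := hR1 Δh Δx
  have hXle : 2 * (s:ℝ) * famFrobSq (Hmap Δh Δx) * sigmaMaxSq b Δh Δx * ((K:ℝ) + N)
      * Real.log L ≤ (D2 / 1000) ^ 2 := by
    have hid : 2 * (s:ℝ) * famFrobSq (Hmap Δh Δx) * sigmaMaxSq b Δh Δx * ((K:ℝ) + N)
        * Real.log L = famFrobSq (Hmap Δh Δx)
          * (8 * (s:ℝ) * sigmaMaxSq b Δh Δx * ((K:ℝ) + N) * Real.log L) / 4 := by ring
    rw [hid]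
    have hmul := mul_le_mul hV2 hT3 hT3nn (by positivity : (0:ℝ) ≤ D2 / 784)
    nlinarith [hmul, sq_nonneg D2]
  have hsqrtX : 2 * Real.sqrt (2 * (s:ℝ) * famFrobSq (Hmap Δh Δx) * sigmaMaxSq b Δh Δx
      * ((K:ℝ) + N) * Real.log L) ≤ D2 / 500 := by
    have h1 := Real.sqrt_le_sqrt hXle
    rw [Real.sqrt_sq (by positivity : (0:ℝ) ≤ D2 / 1000)] at h1
    linarith
  have hAV2 : vnormSq (calA b a (Hmap Δh Δx)) ≤ 3 / 500 * D2 := by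
    linarith [hR1V, hV2, hT3, hsqrtX, hD2nn]
  -- the T part
  set UU : Fin s → Matrix (Fin K) (Fin N) ℂ := fun i => Z i - Hmap Δh Δx i with hUUdef
  have hUT : ∀ i, UU i ∈ Tspace (h0 i) (x0 i) := fun i => (hblock i).2.2.2
  have hPU : (fun i => P i (UU i)) = UU := funext fun i => proj_fix (hP i) (hUT i)
  have hAU := hRIP UU
  rw [hPU] at hAU
  obtain ⟨hAU1, hAU2⟩ := abs_le.mp hAU
  -- norms
  set aZ : ℝ := ‖toE (calA b a Z)‖ with haZ
  set aU : ℝ := ‖toE (calA b a UU)‖ with haU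
  set aV : ℝ := ‖toE (calA b a (Hmap Δh Δx))‖ with haV
  have haZnn : 0 ≤ aZ := norm_nonneg _
  have haUnn : 0 ≤ aU := norm_nonneg _
  have haVnn : 0 ≤ aV := norm_nonneg _
  have hvZ : vnormSq (calA b a Z) = aZ ^ 2 := by rw [haZ, norm_toE, vnorm_sq]
  have hvU : vnormSq (calA b a UU) = aU ^ 2 := by rw [haU, norm_toE, vnorm_sq]
  have hvV : vnormSq (calA b a (Hmap Δh Δx)) = aV ^ 2 := by rw [haV, norm_toE, vnorm_sq]
  have hsplitA : toE (calA b a Z) = toE (calA b a UU) + toE (calA b a (Hmap Δh Δx)) := by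
    ext l
    show calA b a Z l = calA b a UU l + calA b a (Hmap Δh Δx) l
    rw [calA, calA, calA, ← Finset.sum_add_distrib]
    refine Finset.sum_congr rfl fun i _ => ?_
    rw [← calAi_add]
    congr 1
    exact (sub_add_cancel (Z i) (Hmap Δh Δx i)).symm
  have htriZ : aZ ≤ aU + aV := by rw [haZ, hsplitA]; exact norm_add_le _ _
  have htriU : aU ≤ aZ + aV := by
    have : toE (calA b a UU) = toE (calA b a Z) - toE (calA b a (Hmap Δh Δx)) := by
      rw [hsplitA, add_sub_cancel_right]
    rw [haU, this]
    exact (norm_sub_le _ _).trans (by rw [← haZ, ← haV])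
  -- famFrob bounds on UU
  have hfV : famFrob (Hmap Δh Δx) ≤ Real.sqrt D2 / 28 := by
    have h1 := Real.sqrt_le_sqrt hV2
    rw [Real.sqrt_div hD2nn, show Real.sqrt 784 = 28 by
      rw [show (784:ℝ) = 28 ^ 2 by norm_num, Real.sqrt_sq (by norm_num : (0:ℝ) ≤ 28)]] at h1
    exact h1
  have hfZ : famFrob Z = Real.sqrt D2 := rfl
  have hEFsub : toEF UU = toEF Z - toEF (Hmap Δh Δx) := rfl
  have hfU_le : famFrob UU ≤ 29 / 28 * Real.sqrt D2 := by
    rw [← norm_toEF, hEFsub]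
    calc ‖toEF Z - toEF (Hmap Δh Δx)‖ ≤ ‖toEF Z‖ + ‖toEF (Hmap Δh Δx)‖ := norm_sub_le _ _
      _ = famFrob Z + famFrob (Hmap Δh Δx) := by rw [norm_toEF, norm_toEF]
      _ ≤ Real.sqrt D2 + Real.sqrt D2 / 28 := by rw [hfZ]; linarith [hfV]
      _ = 29 / 28 * Real.sqrt D2 := by ring
  have hfU_ge : 27 / 28 * Real.sqrt D2 ≤ famFrob UU := by
    rw [← norm_toEF, hEFsub]
    have h1 : ‖toEF Z‖ - ‖toEF (Hmap Δh Δx)‖ ≤ ‖toEF Z - toEF (Hmap Δh Δx)‖ :=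
      norm_sub_norm_le _ _
    rw [norm_toEF, norm_toEF, hfZ] at h1
    linarith [hfV]
  have hsD2 : Real.sqrt D2 ^ 2 = D2 := Real.sq_sqrt hD2nn
  have hU2_le : famFrobSq UU ≤ 841 / 784 * D2 := by
    rw [← famFrob_sq]
    have h2 := pow_le_pow_left₀ (famFrob_nonneg UU) hfU_le 2
    rw [mul_pow, hsD2] at h2
    exact h2.trans (le_of_eq (by norm_num))
  have hU2_ge : 729 / 784 * D2 ≤ famFrobSq UU := by
    rw [← famFrob_sq]
    have h2 := pow_le_pow_left₀ (by positivity) hfU_ge 2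
    rw [mul_pow, hsD2] at h2
    exact (le_of_eq (by norm_num)).trans h2
  -- assemble
  have hAV2' : aV ^ 2 ≤ 3 / 500 * D2 := by rw [← hvV]; exact hAV2
  have hAU_up : aU ^ 2 ≤ 11 / 10 * famFrobSq UU := by rw [← hvU]; linarith [hAU2]
  have hAU_lo : 9 / 10 * famFrobSq UU ≤ aU ^ 2 := by rw [← hvU]; linarith [hAU1]
  have hgoal : vnormSq (calA b a Z) = aZ ^ 2 := hvZ
  have p1 : 2 * (aU * aV) ≤ aU ^ 2 / 14 + 14 * aV ^ 2 := by
    nlinarith only [sq_nonneg (aU - 14 * aV)]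
  have p2 : aZ * aV ≤ aU * aV + aV ^ 2 := by
    nlinarith only [mul_le_mul_of_nonneg_right htriZ haVnn]
  constructor
  · rw [hgoal]
    have hsq : aU ^ 2 ≤ (aZ + aV) ^ 2 := pow_le_pow_left₀ haUnn htriU 2
    have hsq' : aU ^ 2 ≤ aZ ^ 2 + 2 * (aZ * aV) + aV ^ 2 := by nlinarith only [hsq]
    linarith only [p1, p2, hsq', hAU_lo, hU2_ge, hAV2', hD2nn]
  · rw [hgoal]
    have hsq : aZ ^ 2 ≤ (aU + aV) ^ 2 := pow_le_pow_left₀ haZnn htriZ 2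
    have hsq' : aZ ^ 2 ≤ aU ^ 2 + 2 * (aU * aV) + aV ^ 2 := by nlinarith only [hsq]
    linarith only [p1, hsq', hAU_up, hU2_le, hAV2', hD2nn]
end RGD
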